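/- The following are equivalent: (a) V is semisimple, i.e., R = −R; (b) Σ_{x∈R} x = 0; (c) Σ_{v∈V} ⟨v, x⟩ = 0 for every x ∈ R. Moreover, if Σ_{v∈V} v = 0, then V is semisimple. (For V the set of primitive ray generators of a complete fan Δ, condition (a) is equivalent to reductivity of the automorphism group of the complete toric variety X(N,Δ).) -/

import Mathlib

open Finset

/-- The pairing `⟨v, m⟩ = ∑ i, v i * m i` between `N = ℤ^d` and `M = ℤ^d`. -/
def pairZ {d : ℕ} (v m : Fin d → ℤ) : ℤ := ∑ i, v i * m i

/-- `m` is a Demazure root of the finite set `V ⊆ N`: `⟨v, m⟩ = -1` for some `v ∈ V`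
and `⟨v', m⟩ ≥ 0` for all other `v' ∈ V`. -/
def IsDemazureRoot {d : ℕ} (V : Finset (Fin d → ℤ)) (m : Fin d → ℤ) : Prop :=
  ∃ v ∈ V, pairZ v m = -1 ∧ ∀ v' ∈ V, v' ≠ v → 0 ≤ pairZ v' m

/-- The set of nonnegative real combinations of elements of `V` is all of `ℝ^d`. -/
def PosSpans {d : ℕ} (V : Finset (Fin d → ℤ)) : Prop :=
  ∀ x : Fin d → ℝ, ∃ c : (Fin d → ℤ) → ℝ, (∀ v, 0 ≤ c v) ∧
    x = ∑ v ∈ V, c v • (fun i => ((v i : ℤ) : ℝ))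


lemma pairZ_neg_right {d : ℕ} (v m : Fin d → ℤ) : pairZ v (-m) = -pairZ v m := by
  simp [pairZ, mul_neg]

lemma sum_pairZ_left {d : ℕ} (V : Finset (Fin d → ℤ)) (m : Fin d → ℤ) :
    ∑ v ∈ V, pairZ v m = pairZ (∑ v ∈ V, v) m := by
  simp only [pairZ, Finset.sum_apply, Finset.sum_mul]
  exact Finset.sum_comm

lemma sum_pairZ_right {d : ℕ} (R : Finset (Fin d → ℤ)) (v : Fin d → ℤ) :
    ∑ x ∈ R, pairZ v x = pairZ v (∑ x ∈ R, x) := by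
  simp only [pairZ, Finset.sum_apply, Finset.mul_sum]
  exact Finset.sum_comm

lemma neg_root_of_sum_zero {d : ℕ} {V : Finset (Fin d → ℤ)} {m : Fin d → ℤ}
    (hm : IsDemazureRoot V m) (hs : ∑ v ∈ V, pairZ v m = 0) :
    IsDemazureRoot V (-m) := by
  obtain ⟨η, hηV, hη, hpos⟩ := hm
  have e1 := Finset.add_sum_erase V (fun v => pairZ v m) hηV
  have hex : ∃ w ∈ V.erase η, 0 < pairZ w m := by
    by_contra h
    push_neg at h
    have := Finset.sum_nonpos h
    omega
  obtain ⟨w, hwT, hw1⟩ := hex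
  have hwV := Finset.mem_of_mem_erase hwT
  have e2 := Finset.add_sum_erase (V.erase η) (fun v => pairZ v m) hwT
  have hrest_nonneg : ∀ v ∈ (V.erase η).erase w, 0 ≤ pairZ v m := by
    intro v hv
    have hv' := Finset.mem_of_mem_erase hv
    exact hpos v (Finset.mem_of_mem_erase hv') (Finset.ne_of_mem_erase hv')
  have h0 : 0 ≤ ∑ v ∈ (V.erase η).erase w, pairZ v m := Finset.sum_nonneg hrest_nonneg
  have hrest_sum : ∑ v ∈ (V.erase η).erase w, pairZ v m = 0 := by omega
  have hw : pairZ w m = 1 := by omega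
  have hrest0 : ∀ v ∈ (V.erase η).erase w, pairZ v m = 0 :=
    (Finset.sum_eq_zero_iff_of_nonneg hrest_nonneg).mp hrest_sum
  refine ⟨w, hwV, ?_, ?_⟩
  · rw [pairZ_neg_right, hw]
  · intro v' hv' hne
    rw [pairZ_neg_right]
    by_cases hvη : v' = η
    · subst hvη; rw [hη]; norm_num
    · have : v' ∈ (V.erase η).erase w :=
        Finset.mem_erase.mpr ⟨hne, Finset.mem_erase.mpr ⟨hvη, hv'⟩⟩
      rw [hrest0 v' this]
      norm_num

lemma sum_eq_zero_of_both {d : ℕ} {V : Finset (Fin d → ℤ)} {m : Fin d → ℤ}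
    (hm : IsDemazureRoot V m) (hm' : IsDemazureRoot V (-m)) :
    ∑ v ∈ V, pairZ v m = 0 := by
  obtain ⟨η, hηV, hη, hpos⟩ := hm
  obtain ⟨w, hwV, hw, hpos'⟩ := hm'
  rw [pairZ_neg_right] at hw
  have hw1 : pairZ w m = 1 := by omega
  have hηw : η ≠ w := by intro h; rw [h, hw1] at hη; omega
  have hrest : ∀ v ∈ (V.erase η).erase w, pairZ v m = 0 := by
    intro v hv
    rw [Finset.mem_erase, Finset.mem_erase] at hv
    obtain ⟨hvw, hvη, hvV⟩ := hv
    have h1 := hpos v hvV hvη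
    have h2 := hpos' v hvV hvw
    rw [pairZ_neg_right] at h2
    omega
  have hwT : w ∈ V.erase η := Finset.mem_erase.mpr ⟨Ne.symm hηw, hwV⟩
  have e1 := Finset.add_sum_erase V (fun v => pairZ v m) hηV
  have e2 := Finset.add_sum_erase (V.erase η) (fun v => pairZ v m) hwT
  have e3 : ∑ v ∈ (V.erase η).erase w, pairZ v m = 0 := Finset.sum_eq_zero hrest
  omega

lemma sum_nonneg_of_root {d : ℕ} {V : Finset (Fin d → ℤ)} (hVs : PosSpans V) {m : Fin d → ℤ}
    (hm : IsDemazureRoot V m) : 0 ≤ ∑ v ∈ V, pairZ v m := by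
  obtain ⟨η, hηV, hη, hpos⟩ := hm
  by_contra hneg
  push_neg at hneg
  have e1 := Finset.add_sum_erase V (fun v => pairZ v m) hηV
  have hnn : ∀ v ∈ V.erase η, 0 ≤ pairZ v m := fun v hv =>
    hpos v (Finset.mem_of_mem_erase hv) (Finset.ne_of_mem_erase hv)
  have h0 : 0 ≤ ∑ v ∈ V.erase η, pairZ v m := Finset.sum_nonneg hnn
  have hz : ∀ v ∈ V.erase η, pairZ v m = 0 :=
    (Finset.sum_eq_zero_iff_of_nonneg hnn).mp (by omega)
  have hz' : ∀ v ∈ V, v ≠ η → pairZ v m = 0 := fun v hv hne =>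
    hz v (Finset.mem_erase.mpr ⟨hne, hv⟩)
  obtain ⟨c, hc0, hcx⟩ := hVs (fun i => (m i : ℝ))
  have hy : ∀ i, (m i : ℝ) = ∑ v ∈ V, c v * (v i : ℝ) := by
    intro i
    have := congrFun hcx i
    simpa using this
  have hA : ∑ i, (m i : ℝ) * (m i : ℝ) = ∑ v ∈ V, c v * ((pairZ v m : ℤ) : ℝ) := by
    calc ∑ i, (m i : ℝ) * (m i : ℝ)
        = ∑ i, (∑ v ∈ V, c v * (v i : ℝ)) * (m i : ℝ) :=
          Finset.sum_congr rfl fun i _ => by rw [← hy i]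
      _ = ∑ v ∈ V, ∑ i, c v * (v i : ℝ) * (m i : ℝ) := by
          simp_rw [Finset.sum_mul]; exact Finset.sum_comm
      _ = ∑ v ∈ V, c v * ((pairZ v m : ℤ) : ℝ) := by
          refine Finset.sum_congr rfl fun v _ => ?_
          push_cast [pairZ]
          rw [Finset.mul_sum]
          exact Finset.sum_congr rfl fun i _ => by ring
  have hAle : ∑ v ∈ V, c v * ((pairZ v m : ℤ) : ℝ) ≤ 0 := by
    apply Finset.sum_nonpos
    intro v hv
    by_cases hvη : v = η
    · subst hvη; rw [hη]; push_cast; nlinarith [hc0 v]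
    · rw [hz' v hv hvη]; simp
  have hm0 : m ≠ 0 := by
    intro h; rw [h] at hη; simp [pairZ] at hη
  obtain ⟨i0, hi0⟩ : ∃ i, m i ≠ 0 := by
    by_contra h; push_neg at h; exact hm0 (funext h)
  have hApos : 0 < ∑ i, (m i : ℝ) * (m i : ℝ) := by
    apply Finset.sum_pos' (fun i _ => mul_self_nonneg _)
    exact ⟨i0, Finset.mem_univ _, mul_self_pos.mpr (by exact_mod_cast hi0)⟩
  linarith [hA ▸ hApos]

lemma sumR_zero {d : ℕ} {R : Finset (Fin d → ℤ)} (h : ∀ m ∈ R, -m ∈ R) :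
    ∑ x ∈ R, x = 0 := by
  have key : ∑ x ∈ R, x = ∑ x ∈ R, -x := by
    apply Finset.sum_nbij' (i := fun x => -x) (j := fun x => -x)
    · exact fun a ha => h a ha
    · exact fun a ha => h a ha
    · intro a _; simp
    · intro a _; simp
    · intro a _; simp
  have key2 : (∑ x ∈ R, x) + ∑ x ∈ R, x = 0 := by
    nth_rewrite 2 [key]
    rw [← Finset.sum_add_distrib]
    exact Finset.sum_eq_zero fun x _ => by simp
  funext i
  have h2 := congrFun key2 i
  simp only [Pi.add_apply, Pi.zero_apply] at h2
  simp only [Pi.zero_apply]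
  omega

/-- For `V` a finite set of nonzero vectors positively spanning `ℝ^d` with (finite) set of
Demazure roots `R`, the following are equivalent: (a) `V` is semisimple, i.e. `R = -R`;
(b) `∑_{x ∈ R} x = 0`; (c) `∑_{v ∈ V} ⟨v, x⟩ = 0` for every `x ∈ R`.
Moreover, if `∑_{v ∈ V} v = 0`, then `V` is semisimple. -/
theorem stmt2 {d : ℕ} (V : Finset (Fin d → ℤ)) (hV0 : (0 : Fin d → ℤ) ∉ V)
    (hVs : PosSpans V) (R : Finset (Fin d → ℤ))
    (hR : ∀ m, m ∈ R ↔ IsDemazureRoot V m) :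
    (((∀ m ∈ R, -m ∈ R) ↔ ∑ x ∈ R, x = 0) ∧
      ((∀ m ∈ R, -m ∈ R) ↔ ∀ x ∈ R, ∑ v ∈ V, pairZ v x = 0)) ∧
    ((∑ v ∈ V, v = 0) → ∀ m ∈ R, -m ∈ R) := by
  have hc_of_a : (∀ m ∈ R, -m ∈ R) → ∀ x ∈ R, ∑ v ∈ V, pairZ v x = 0 := by
    intro h x hx
    exact sum_eq_zero_of_both ((hR x).mp hx) ((hR (-x)).mp (h x hx))
  have ha_of_c : (∀ x ∈ R, ∑ v ∈ V, pairZ v x = 0) → ∀ m ∈ R, -m ∈ R := by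
    intro h m hm
    exact (hR (-m)).mpr (neg_root_of_sum_zero ((hR m).mp hm) (h m hm))
  have ha_of_b : (∑ x ∈ R, x = 0) → ∀ m ∈ R, -m ∈ R := by
    intro hb
    apply ha_of_c
    have htot : ∑ x ∈ R, ∑ v ∈ V, pairZ v x = 0 := by
      rw [Finset.sum_comm]
      refine Finset.sum_eq_zero fun v _ => ?_
      rw [sum_pairZ_right, hb]
      simp [pairZ]
    exact (Finset.sum_eq_zero_iff_of_nonneg
      (fun x hx => sum_nonneg_of_root hVs ((hR x).mp hx))).mp htot
  refine ⟨⟨⟨fun ha => sumR_zero ha, ha_of_b⟩, ⟨hc_of_a, ha_of_c⟩⟩, ?_⟩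
  intro hsum
  apply ha_of_c
  intro x _
  rw [sum_pairZ_left, hsum]
  simp [pairZ]
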